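/- The Lobachevsky function Л(θ) = −∫₀^θ log|2 sin t| dt is well defined for every real θ (the integrand t ↦ log|2 sin t| is interval-integrable on [0,θ] for every θ ∈ ℝ), and Л is continuous on all of ℝ. -/

import Mathlib

open Real MeasureTheory
open scoped Interval

/-- The Lobachevsky function `Л(θ) = −∫₀^θ log |2 sin t| dt`. -/
noncomputable def lobachevsky (θ : ℝ) : ℝ := -∫ t in (0 : ℝ)..θ, Real.log |2 * Real.sin t|

/-- `log` is integrable on `(0, 1]`. -/
lemma integrableOn_log_Ioc01 : IntegrableOn Real.log (Set.Ioc (0:ℝ) 1) volume := by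
  have key : ∀ n : ℕ, (0:ℝ) < 1 / ((n:ℝ) + 1) ∧ 1 / ((n:ℝ) + 1) ≤ 1 := by
    intro n
    constructor
    · positivity
    · rw [div_le_one (by positivity)]
      have : (0:ℝ) ≤ (n:ℝ) := Nat.cast_nonneg n
      linarith
  have hnot : ∀ n : ℕ, (0:ℝ) ∉ [[1 / ((n:ℝ) + 1), 1]] := by
    intro n
    rw [Set.uIcc_of_le (key n).2]
    exact fun h => absurd h.1 (not_le.mpr (key n).1)
  apply integrableOn_Ioc_of_intervalIntegral_norm_bounded_left (I := 1)
      (a := fun n : ℕ => 1 / ((n:ℝ) + 1)) (l := Filter.atTop)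
  · intro n
    exact ((intervalIntegral.intervalIntegrable_log (hnot n))).1
  · exact tendsto_one_div_add_atTop_nhds_zero_nat
  · filter_upwards with n
    have hε : (0:ℝ) < 1 / ((n:ℝ) + 1) := (key n).1
    have hε1 : 1 / ((n:ℝ) + 1) ≤ 1 := (key n).2
    set ε : ℝ := 1 / ((n:ℝ) + 1)
    have heq : ∫ x in Set.Ioc ε 1, ‖Real.log x‖ = ∫ x in ε..1, ‖Real.log x‖ :=
      (intervalIntegral.integral_of_le hε1).symm
    rw [heq]
    have h2 : ∫ x in ε..1, ‖Real.log x‖ = ∫ x in ε..1, -Real.log x := by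
      apply intervalIntegral.integral_congr
      intro x hx
      rw [Set.uIcc_of_le hε1] at hx
      have hx0 : 0 < x := lt_of_lt_of_le hε hx.1
      show ‖Real.log x‖ = -Real.log x
      rw [Real.norm_eq_abs, abs_of_nonpos (Real.log_nonpos hx0.le hx.2)]
    rw [h2, intervalIntegral.integral_neg, integral_log]
    have hεlog : ε * Real.log ε ≤ 0 :=
      mul_nonpos_of_nonneg_of_nonpos hε.le (Real.log_nonpos hε.le hε1)
    simp only [Real.log_one, mul_zero]
    linarith

/-- `log |sin|` is interval integrable on `[0, 1]`. -/
lemma intervalIntegrable_log_abs_sin_01 :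
    IntervalIntegrable (fun x : ℝ => Real.log |Real.sin x|) volume 0 1 := by
  rw [intervalIntegrable_iff_integrableOn_Ioc_of_le zero_le_one]
  have hmeas : AEStronglyMeasurable (fun x : ℝ => Real.log |Real.sin x|)
      (volume.restrict (Set.Ioc (0:ℝ) 1)) :=
    (Real.measurable_log.comp (Real.continuous_sin.measurable.abs)).aestronglyMeasurable
  have hbound : IntegrableOn (fun x : ℝ => -Real.log x + Real.log (π / 2))
      (Set.Ioc (0:ℝ) 1) volume :=
    integrableOn_log_Ioc01.neg.add ((integrableOn_const_iff).mpr (Or.inr measure_Ioc_lt_top))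
  apply Integrable.mono' hbound hmeas
  filter_upwards [ae_restrict_mem measurableSet_Ioc] with x hx
  obtain ⟨hx0, hx1⟩ := hx
  have hπ : (0:ℝ) < π := Real.pi_pos
  have hxpi : x ≤ π / 2 := hx1.trans (by linarith [Real.pi_gt_three])
  have hjordan : 2 / π * x ≤ Real.sin x := Real.mul_le_sin hx0.le hxpi
  have hsinpos : 0 < Real.sin x := lt_of_lt_of_le (by positivity) hjordan
  have hsinle : Real.sin x ≤ x := Real.sin_le hx0.le
  have hlow : Real.log (2 / π * x) ≤ Real.log (Real.sin x) :=
    Real.log_le_log (by positivity) hjordan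
  rw [Real.log_mul (by positivity) (ne_of_gt hx0)] at hlow
  have hup : Real.log (Real.sin x) ≤ 0 := Real.log_nonpos hsinpos.le (hsinle.trans hx1)
  have hloginv : -Real.log (2 / π) = Real.log (π / 2) := by
    rw [← Real.log_inv, inv_div]
  rw [abs_of_pos hsinpos, Real.norm_eq_abs, abs_of_nonpos hup]
  linarith

/-- `|sin|` is invariant under adding integer multiples of `π`. -/
lemma abs_sin_add_int_mul_pi (k : ℤ) (x : ℝ) :
    |Real.sin (x + k * π)| = |Real.sin x| := by
  have hcos : |Real.cos ((k:ℝ) * π)| = 1 := by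
    have h := Real.sin_sq_add_cos_sq ((k:ℝ) * π)
    rw [Real.sin_int_mul_pi] at h
    have h2 : Real.cos ((k:ℝ) * π) ^ 2 = 1 := by nlinarith
    have h3 : (Real.cos ((k:ℝ) * π) - 1) * (Real.cos ((k:ℝ) * π) + 1) = 0 := by nlinarith
    rcases mul_eq_zero.mp h3 with h4 | h4
    · have : Real.cos ((k:ℝ) * π) = 1 := by linarith
      rw [this, abs_one]
    · have : Real.cos ((k:ℝ) * π) = -1 := by linarith
      rw [this, abs_neg, abs_one]
  rw [Real.sin_add, Real.sin_int_mul_pi, mul_zero, add_zero, abs_mul, hcos, mul_one]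

/-- `log |sin|` is interval integrable on every interval. -/
lemma intervalIntegrable_log_abs_sin (a b : ℝ) :
    IntervalIntegrable (fun x : ℝ => Real.log |Real.sin x|) volume a b := by
  set f : ℝ → ℝ := fun x => Real.log |Real.sin x| with hf
  have hπ : (0:ℝ) < π := Real.pi_pos
  -- integrable on [0, π/2]
  have hA : IntervalIntegrable f volume 0 (π / 2) := by
    refine intervalIntegrable_log_abs_sin_01.trans ?_
    have h1 : (1:ℝ) ≤ π / 2 := by linarith [Real.pi_gt_three]
    apply ContinuousOn.intervalIntegrable
    apply ContinuousOn.log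
    · exact (Real.continuous_sin.abs).continuousOn
    · intro x hx
      rw [Set.uIcc_of_le h1] at hx
      have hxpos : 0 < Real.sin x := Real.sin_pos_of_pos_of_lt_pi
        (lt_of_lt_of_le one_pos hx.1) (lt_of_le_of_lt hx.2 (by linarith))
      exact ne_of_gt (abs_pos.mpr (ne_of_gt hxpos))
  -- integrable on [π/2, π] by symmetry
  have hB : IntervalIntegrable f volume (π / 2) π := by
    have h := hA.comp_sub_left π
    simp only [sub_zero, sub_half] at h
    have heq : (fun x : ℝ => f (π - x)) = f := by
      funext x
      simp only [hf, Real.sin_pi_sub]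
    rw [heq] at h
    exact h.symm
  have hC : IntervalIntegrable f volume 0 π := hA.trans hB
  -- integrable on [kπ, (k+1)π] for every integer k
  have hD : ∀ k : ℤ, IntervalIntegrable f volume (k * π) ((k + 1) * π) := by
    intro k
    have h := hC.comp_add_right (-(k * π))
    have heq : (fun x : ℝ => f (x + -(k * π))) = f := by
      funext x
      simp only [hf]
      have : x + -((k:ℝ) * π) = x + (-k : ℤ) * π := by push_cast; ring
      rw [this, abs_sin_add_int_mul_pi]
    rw [heq] at h
    simp only [zero_sub, neg_neg] at h
    have h2 : π - -((k:ℝ) * π) = ((k:ℝ) + 1) * π := by ring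
    rw [h2] at h
    exact_mod_cast h
  -- integrable on [-nπ, nπ] for every natural n
  have hE : ∀ n : ℕ, IntervalIntegrable f volume (-(n * π)) (n * π) := by
    intro n
    induction n with
    | zero => simpa using hC.mono_set (by simp)
    | succ n ih =>
      have hleft : IntervalIntegrable f volume (-(((n:ℝ) + 1) * π)) (-((n:ℝ) * π)) := by
        have h := hD (-(n + 1))
        have e1 : ((-((n:ℕ) + 1) : ℤ) : ℝ) * π = -(((n:ℝ) + 1) * π) := by push_cast; ring
        have e2 : (((-((n:ℕ) + 1) : ℤ) : ℝ) + 1) * π = -((n:ℝ) * π) := by push_cast; ring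
        rwa [e1, e2] at h
      have hright : IntervalIntegrable f volume ((n:ℝ) * π) (((n:ℝ) + 1) * π) := by
        have h := hD n
        push_cast at h
        exact h
      have := (hleft.trans ih).trans hright
      push_cast
      exact this
  -- conclude by picking n large enough
  obtain ⟨n, hn⟩ := exists_nat_ge (max |a| |b| / π)
  have hn' : max |a| |b| ≤ n * π := by
    rw [div_le_iff₀ hπ] at hn
    exact hn
  apply (hE n).mono_set
  have hmem : ∀ c : ℝ, |c| ≤ max |a| |b| → c ∈ Set.uIcc (-(n * π)) ((n:ℝ) * π) := by
    intro c hc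
    have h1 : |c| ≤ (n:ℝ) * π := hc.trans hn'
    rw [Set.uIcc_of_le (by linarith [abs_nonneg c])]
    exact abs_le.mp h1
  exact Set.uIcc_subset_uIcc (hmem a (le_max_left _ _)) (hmem b (le_max_right _ _))

/-- The Lobachevsky function is well defined for every real `θ`
(the integrand `t ↦ log |2 sin t|` is interval-integrable on `[0,θ]` for every `θ`),
and `Л` is continuous on all of `ℝ`. -/
theorem lobachevsky_integrable_and_continuous :
    (∀ θ : ℝ, IntervalIntegrable (fun t : ℝ => Real.log |2 * Real.sin t|)
      MeasureTheory.volume 0 θ) ∧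
    Continuous lobachevsky := by
  have hae : ∀ᵐ t : ℝ ∂volume, Real.sin t ≠ 0 := by
    rw [MeasureTheory.ae_iff]
    have hset : {t : ℝ | ¬Real.sin t ≠ 0} = Set.range (fun k : ℤ => (k:ℝ) * π) := by
      ext t
      simp only [Set.mem_setOf_eq, not_not, Set.mem_range, Real.sin_eq_zero_iff]
    rw [hset]
    exact Set.Countable.measure_zero (Set.countable_range _) _
  have hcongr : ∀ a b : ℝ,
      IntervalIntegrable (fun t : ℝ => Real.log |2 * Real.sin t|) volume a b := by
    intro a b
    have hadd : IntervalIntegrable (fun t : ℝ => Real.log 2 + Real.log |Real.sin t|)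
        volume a b :=
      intervalIntegrable_const.add (intervalIntegrable_log_abs_sin a b)
    have heq : (fun t : ℝ => Real.log 2 + Real.log |Real.sin t|) =ᵐ[volume]
        (fun t : ℝ => Real.log |2 * Real.sin t|) := by
      filter_upwards [hae] with t ht
      rw [abs_mul, Real.log_mul (by norm_num) (abs_ne_zero.mpr ht), abs_two]
    exact hadd.congr_ae (heq.filter_mono (MeasureTheory.ae_mono Measure.restrict_le_self))
  refine ⟨fun θ => hcongr 0 θ, ?_⟩
  have : lobachevsky = fun θ => -∫ t in (0:ℝ)..θ, Real.log |2 * Real.sin t| := rfl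
  rw [this]
  exact (intervalIntegral.continuous_primitive (fun a b => hcongr a b) 0).neg
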